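/- Let δ ∈ ℤ, and let λ be a partition of size at most n whose δ-marked abacus (with n beads) has a bead, say the j-th, on the marked runner v_λ with an empty space immediately above it. Let μ be the partition obtained by moving that bead up one space (so |μ| = |λ| - p). Then there exists r ∈ ℤ and w in the symmetric group on coordinates {1,...,n} such that μ̂ = w s_{0,j} ·_{δ+rp} λ̂, i.e. μ̂ lies in the (δ+rp)-shifted orbit of λ̂ under the symmetric group on {0,1,...,n}. -/

import Mathlib

def IsPartWithin (n : ℕ) (f : ℕ → ℕ) : Prop :=
  (∀ i j, i ≤ j → f j ≤ f i) ∧ ∀ i, n ≤ i → f i = 0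

def psize (n : ℕ) (f : ℕ → ℕ) : ℕ := ∑ i ∈ Finset.range n, f i

/-- `λ̂ = (-|λ|, λ_1, …, λ_n)`. -/
def hatP (n : ℕ) (f : ℕ → ℕ) : Fin (n + 1) → ℤ :=
  fun m => if (m : ℕ) = 0 then -(psize n f : ℤ) else (f ((m : ℕ) - 1) : ℤ)

/-- `ρ_n(δ) = (δ, -1, …, -n)`. -/
def rhoP (n : ℕ) (δ : ℤ) : Fin (n + 1) → ℤ :=
  fun m => if (m : ℕ) = 0 then δ else -((m : ℕ) : ℤ)

/-- Case A of Proposition 8.6: suppose the `δ`-marked abacus of `λ`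
with `n` beads (bead `j` at position `λ_j - j + n`, marked runner
`v_λ ≡ δ - |λ| + n mod p`) has bead `j` on the marked runner with the space
immediately above it empty, and let `μ` be the partition obtained by moving bead `j`
up one space (its bead positions are those of `λ` with `λ_j - j + n` replaced by
`λ_j - j + n - p`; in particular `|μ| = |λ| - p`).  Then there are `r ∈ ℤ` and a
permutation `w` of `{0,…,n}` fixing `0` (i.e. `w ∈ W_n`, the symmetric group on
`{1,…,n}`) with `μ̂ = w s_{0,j} ·_{δ+rp} λ̂`, where `w' ·_δ x = w'(x + ρ_n(δ)) - ρ_n(δ)`. -/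
theorem bead_up_is_reflection (p : ℕ) [Fact p.Prime] (δ : ℤ) (n : ℕ)
    (lam mu : ℕ → ℕ)
    (hlam : IsPartWithin n lam) (hlsz : psize n lam ≤ n)
    (hmu : IsPartWithin n mu)
    (j : ℕ) (hj1 : 1 ≤ j) (hjn : j ≤ n)
    -- bead `j` lies on the marked runner `v_λ`:
    (hrunner : (((lam (j - 1) : ℤ) - j : ℤ) : ZMod p) = ((δ - (psize n lam : ℤ) : ℤ) : ZMod p))
    -- the space immediately above bead `j` exists and is empty:
    (hroom : (p : ℤ) ≤ (lam (j - 1) : ℤ) - j + n)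
    (hempty : ∀ j', 1 ≤ j' → j' ≤ n →
      (lam (j' - 1) : ℤ) - j' ≠ (lam (j - 1) : ℤ) - j - p)
    -- `μ` is obtained from `λ` by moving bead `j` up one space:
    (hmove : ∃ τ : Equiv.Perm (Fin n), ∀ m : Fin n,
      (mu ((τ m : Fin n) : ℕ) : ℤ) - (((τ m : Fin n) : ℕ) + 1)
        = if (m : ℕ) = j - 1 then (lam (j - 1) : ℤ) - j - p
          else (lam (m : ℕ) : ℤ) - ((m : ℕ) + 1)) :
    ∃ r : ℤ, ∃ w : Equiv.Perm (Fin (n + 1)), w 0 = 0 ∧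
      ∀ m : Fin (n + 1),
        hatP n mu m + rhoP n (δ + r * p) m
          = (hatP n lam + rhoP n (δ + r * p))
              (Equiv.swap (0 : Fin (n + 1)) ⟨j, by omega⟩ (w m)) := by

  obtain ⟨τ, htau⟩ := hmove
  have hp : 0 < p := (Fact.out : p.Prime).pos
  have hn : 1 ≤ n := le_trans hj1 hjn
  have hjn' : j - 1 < n := by omega
  have hdvd : (p : ℤ) ∣ ((δ - (psize n lam : ℤ)) - ((lam (j - 1) : ℤ) - j)) :=
    Int.ModEq.dvd ((ZMod.intCast_eq_intCast_iff _ _ _).mp hrunner)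
  obtain ⟨c, hc⟩ := hdvd
  have hE : δ + (-c - 1) * p = ((lam (j - 1) : ℤ) - j) + (psize n lam : ℤ) - p := by
    linear_combination hc
  -- |μ| = |λ| - p
  have hsum : (psize n mu : ℤ) = (psize n lam : ℤ) - p := by
    have h1 : ∑ m : Fin n, ((mu ((τ m : Fin n) : ℕ) : ℤ) - (((τ m : Fin n) : ℕ) + 1))
        = ∑ i : Fin n, ((mu (i : ℕ) : ℤ) - ((i : ℕ) + 1)) :=
      Equiv.sum_comp τ (fun i => (mu (i : ℕ) : ℤ) - ((i : ℕ) + 1))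
    have h2 : ∑ m : Fin n, ((mu ((τ m : Fin n) : ℕ) : ℤ) - (((τ m : Fin n) : ℕ) + 1))
        = ∑ m : Fin n, (((lam (m : ℕ) : ℤ) - ((m : ℕ) + 1))
            - if m = (⟨j - 1, hjn'⟩ : Fin n) then (p : ℤ) else 0) := by
      refine Finset.sum_congr rfl (fun m _ => ?_)
      rw [htau m]
      by_cases h : (m : ℕ) = j - 1
      · have hm : m = (⟨j - 1, hjn'⟩ : Fin n) := Fin.ext h
        rw [if_pos h, if_pos hm, h]
        omega
      · have hm : m ≠ (⟨j - 1, hjn'⟩ : Fin n) := fun hm => h (by rw [hm])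
        rw [if_neg h, if_neg hm]; ring
    have h3 : ∑ m : Fin n, (((lam (m : ℕ) : ℤ) - ((m : ℕ) + 1))
            - if m = (⟨j - 1, hjn'⟩ : Fin n) then (p : ℤ) else 0)
        = (∑ m : Fin n, ((lam (m : ℕ) : ℤ) - ((m : ℕ) + 1))) - p := by
      rw [Finset.sum_sub_distrib, Finset.sum_ite_eq' Finset.univ _ (fun _ => (p : ℤ))]
      simp
    have hmu' : (psize n mu : ℤ) = ∑ i : Fin n, (mu (i : ℕ) : ℤ) := by
      rw [psize, Nat.cast_sum, Fin.sum_univ_eq_sum_range (fun i => (mu i : ℤ))]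
    have hlam' : (psize n lam : ℤ) = ∑ i : Fin n, (lam (i : ℕ) : ℤ) := by
      rw [psize, Nat.cast_sum, Fin.sum_univ_eq_sum_range (fun i => (lam i : ℤ))]
    have h4 := h1.symm.trans (h2.trans h3)
    rw [Finset.sum_sub_distrib, Finset.sum_sub_distrib] at h4
    rw [hmu', hlam']
    linarith
  refine ⟨-c - 1, Equiv.Perm.decomposeFin.symm (0, τ⁻¹), by simp, ?_⟩
  intro m
  have hj0 : ((⟨j, by omega⟩ : Fin (n + 1)) : ℕ) ≠ 0 := by simpa using (by omega : j ≠ 0)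
  induction m using Fin.cases with
  | zero =>
      have hw0 : (Equiv.Perm.decomposeFin.symm (0, τ⁻¹) : Equiv.Perm (Fin (n + 1))) 0 = 0 := by
        simp
      rw [hw0, Equiv.swap_apply_left]
      simp only [Pi.add_apply, hatP, rhoP, Fin.val_zero, if_true, eq_self_iff_true,
        if_neg hj0]
      rw [hsum]
      linarith [hE]
  | succ i =>
      have hws : (Equiv.Perm.decomposeFin.symm (0, τ⁻¹) : Equiv.Perm (Fin (n + 1))) i.succ
          = (τ⁻¹ i).succ := by
        rw [Equiv.Perm.decomposeFin_symm_apply_succ]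
        simp
      rw [hws]
      have hti := htau (τ⁻¹ i)
      rw [show τ (τ⁻¹ i) = i from τ.apply_symm_apply i] at hti
      by_cases h : ((τ⁻¹ i : Fin n) : ℕ) = j - 1
      · have hfin : ((τ⁻¹ i : Fin n).succ : Fin (n + 1)) = ⟨j, by omega⟩ := by
          apply Fin.ext; simp only [Fin.val_succ, h, Fin.val_mk]; omega
        rw [hfin, Equiv.swap_apply_right]
        rw [if_pos h] at hti
        simp only [Pi.add_apply, hatP, rhoP, Fin.val_succ, Fin.val_zero, if_pos rfl,
          Nat.add_sub_cancel, Nat.succ_ne_zero, if_neg (Nat.succ_ne_zero _)]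
        push_cast
        linarith [hti, hE]
      · have hne1 : ((τ⁻¹ i : Fin n).succ : Fin (n + 1)) ≠ 0 := Fin.succ_ne_zero _
        have hne2 : ((τ⁻¹ i : Fin n).succ : Fin (n + 1)) ≠ ⟨j, by omega⟩ := by
          intro hcon
          apply h
          have := congrArg Fin.val hcon
          simp only [Fin.val_succ, Fin.val_mk] at this
          omega
        rw [Equiv.swap_apply_of_ne_of_ne hne1 hne2]
        rw [if_neg h] at hti
        simp only [Pi.add_apply, hatP, rhoP, Fin.val_succ, Nat.succ_ne_zero,
          if_neg (Nat.succ_ne_zero _), Nat.add_sub_cancel]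
        push_cast
        linarith [hti]
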